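/- Invariance of reachable sets: for every τ ≥ 0, U^τ ⊆ dom L₀* and the image L₀*(U^τ) equals U^τ; consequently L₀*(U) = U. -/

import Mathlib

open MeasureTheory
open scoped ComplexInnerProductSpace

variable {H : Type*} [NormedAddCommGroup H] [InnerProductSpace ℂ H] [CompleteSpace H]

/-- `Iᵗ = L^{-1/2}·sin(t·L^{1/2})`, realized by applying the continuous functional calculus of
the bounded positive self-adjoint operator `T = L⁻¹` to the continuous function
`hₜ(x) = √x·sin(t/√x)` (for `x > 0`, extended by `0` at `x ≤ 0`). -/
noncomputable def waveOp (T : H →L[ℂ] H) (t : ℝ) : H →L[ℂ] H :=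
  cfc (fun x : ℝ => if 0 < x then Real.sqrt x * Real.sin (t / Real.sqrt x) else 0) T

/-- The class `M` of smooth controls: smooth `K`-valued functions of time vanishing near `t = 0`
(all time functions are extended by zero to `t < 0`). -/
def IsSmoothControl (K : Submodule ℂ H) (f : ℝ → H) : Prop :=
  ContDiff ℝ (⊤ : ℕ∞) f ∧ (∀ t, f t ∈ K) ∧ ∃ ε > 0, ∀ t ≤ ε, f t = 0

/-- The wave `u^f(t) = -f(t) + ∫₀ᵗ I^{t-s} f''(s) ds` (Bochner integral). -/
noncomputable def wave (T : H →L[ℂ] H) (f : ℝ → H) (t : ℝ) : H :=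
  -f t + ∫ s in (0:ℝ)..t, waveOp T (t - s) (deriv (deriv f) s)

/-- The context of the paper: `L₀` is a closed, densely defined, symmetric, positive definite
operator in the Hilbert space `H`; `L` is its Friedrichs (self-adjoint) extension,
`L₀ ⊆ L ⊆ L₀*`, with an everywhere defined bounded self-adjoint positive injective inverse `T`;
`K = ker L₀*`.  The boundary operators are `Γ₁y = T(L₀*y) − y` and `Γ₂y = P(L₀*y)`, where `P`
is the orthogonal projection onto `K`. -/
structure Setting (L₀ L : H →ₗ.[ℂ] H) (T : H →L[ℂ] H) (K : Submodule ℂ H) : Prop where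
  dense_domain : Dense (L₀.domain : Set H)
  closed : L₀.IsClosed
  symmetric : ∀ x y : L₀.domain, ⟪L₀ x, (y : H)⟫ = ⟪(x : H), L₀ y⟫
  posdef : ∃ γ : ℝ, 0 < γ ∧ ∀ x : L₀.domain, γ * ‖(x : H)‖ ^ 2 ≤ (⟪L₀ x, (x : H)⟫).re
  extension : L₀ ≤ L
  le_adjoint : L ≤ L₀.adjoint
  selfadjoint : L.adjoint = L
  T_selfadjoint : IsSelfAdjoint T
  T_positive : ∀ x : H, 0 ≤ (⟪T x, x⟫).re
  T_injective : Function.Injective T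
  T_inv_left : ∀ x : L.domain, T (L x) = x
  T_mem_domain : ∀ y : H, T y ∈ L.domain
  T_inv_right : ∀ y : H, ∀ hy : T y ∈ L.domain, L ⟨T y, hy⟩ = y
  kernel : ∀ x : H, x ∈ K ↔ ∃ hx : x ∈ L₀.adjoint.domain, L₀.adjoint ⟨x, hx⟩ = 0

/-- The reachable set `U^τ = {u^f(τ) : f ∈ M}` for `τ ≥ 0`, and `{0}` for `τ < 0`. -/
def reachSet (K : Submodule ℂ H) (T : H →L[ℂ] H) (τ : ℝ) : Set H :=
  if 0 ≤ τ then {x | ∃ f, IsSmoothControl K f ∧ wave T f τ = x} else {0}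

/-- The total reachable set `U = span ⋃_{τ>0} U^τ`. -/
def reachSpan (K : Submodule ℂ H) (T : H →L[ℂ] H) : Submodule ℂ H :=
  Submodule.span ℂ (⋃ τ ∈ Set.Ioi (0:ℝ), reachSet K T τ)

/-- The wave `v^ψ(t) = ∫₀ᵗ I^{t-s} ψ(s) ds` produced by a source `ψ` in system `β`. -/
noncomputable def sourceWave (T : H →L[ℂ] H) (ψ : ℝ → H) (t : ℝ) : H :=
  ∫ s in (0:ℝ)..t, waveOp T (t - s) (ψ s)


noncomputable def hfun (r x : ℝ) : ℝ :=
  if 0 < x then Real.sqrt x * Real.sin (r / Real.sqrt x) else 0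

lemma abs_sin_sub_sin_le (a b : ℝ) : |Real.sin a - Real.sin b| ≤ |a - b| := by
  rw [Real.sin_sub_sin, abs_mul, abs_mul, abs_two]
  calc 2 * |Real.sin ((a - b) / 2)| * |Real.cos ((a + b) / 2)|
      ≤ 2 * |(a - b) / 2| * 1 :=
        mul_le_mul (mul_le_mul_of_nonneg_left Real.abs_sin_le_abs (by norm_num))
          (Real.abs_cos_le_one _) (abs_nonneg _) (by positivity)
    _ = |a - b| := by rw [abs_div, mul_one, abs_two]; ring

lemma hfun_abs_le (r x : ℝ) : |hfun r x| ≤ |r| := by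
  unfold hfun
  split_ifs with hx
  · have h1 : Real.sqrt x ≠ 0 := ne_of_gt (Real.sqrt_pos.2 hx)
    calc |Real.sqrt x * Real.sin (r / Real.sqrt x)|
        = Real.sqrt x * |Real.sin (r / Real.sqrt x)| := by
          rw [abs_mul, abs_of_nonneg (Real.sqrt_nonneg x)]
      _ ≤ Real.sqrt x * |r / Real.sqrt x| := by
          have := Real.abs_sin_le_abs (x := r / Real.sqrt x)
          gcongr
      _ = |r| := by
          rw [abs_div, abs_of_nonneg (Real.sqrt_nonneg x)]
          field_simp
  · simp

lemma hfun_sub_abs_le (r r' x : ℝ) : |hfun r x - hfun r' x| ≤ |r - r'| := by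
  unfold hfun
  split_ifs with hx
  · have h1 : (0:ℝ) < Real.sqrt x := Real.sqrt_pos.2 hx
    rw [← mul_sub, abs_mul, abs_of_nonneg (Real.sqrt_nonneg x)]
    calc Real.sqrt x * |Real.sin (r / Real.sqrt x) - Real.sin (r' / Real.sqrt x)|
        ≤ Real.sqrt x * |r / Real.sqrt x - r' / Real.sqrt x| := by
          have := abs_sin_sub_sin_le (r / Real.sqrt x) (r' / Real.sqrt x)
          gcongr
      _ = |r - r'| := by
          rw [div_sub_div_same, abs_div, abs_of_nonneg (Real.sqrt_nonneg x)]
          field_simp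
  · simp

lemma hfun_cont2 : Continuous (Function.uncurry hfun) := by
  rw [continuous_iff_continuousAt]
  rintro ⟨r, x⟩
  rcases lt_trichotomy x 0 with hx | rfl | hx
  · have hmem : {p : ℝ × ℝ | p.2 < 0} ∈ nhds ((r, x) : ℝ × ℝ) :=
      (isOpen_lt continuous_snd continuous_const).mem_nhds hx
    have hev : Function.uncurry hfun =ᶠ[nhds ((r, x) : ℝ × ℝ)] fun _ => (0:ℝ) := by
      filter_upwards [hmem] with p hp
      simp only [Function.uncurry, hfun, if_neg (not_lt.2 hp.le)]
    exact continuousAt_const.congr hev.symm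
  · have h0 : Function.uncurry hfun (r, 0) = 0 := by simp [hfun, Function.uncurry]
    rw [ContinuousAt, h0]
    apply squeeze_zero_norm (a := fun p : ℝ × ℝ => Real.sqrt |p.2|)
    · rintro ⟨a, b⟩
      simp only [Function.uncurry, hfun, Real.norm_eq_abs]
      split_ifs with hb
      · calc |Real.sqrt b * Real.sin (a / Real.sqrt b)|
            ≤ Real.sqrt b * 1 := by
              rw [abs_mul, abs_of_nonneg (Real.sqrt_nonneg b)]
              gcongr
              exact Real.abs_sin_le_one _
          _ = Real.sqrt |b| := by rw [mul_one, abs_of_pos hb]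
      · simp [Real.sqrt_nonneg]
    · have h1 : ContinuousAt (fun p : ℝ × ℝ => Real.sqrt |p.2|) (r, 0) :=
        (Real.continuous_sqrt.comp (continuous_abs.comp continuous_snd)).continuousAt
      rw [ContinuousAt] at h1
      simpa using h1
  · have hmem : {p : ℝ × ℝ | 0 < p.2} ∈ nhds ((r, x) : ℝ × ℝ) :=
      (isOpen_lt continuous_const continuous_snd).mem_nhds hx
    have hev : (fun p : ℝ × ℝ => Real.sqrt p.2 * Real.sin (p.1 / Real.sqrt p.2))
        =ᶠ[nhds ((r, x) : ℝ × ℝ)] Function.uncurry hfun := by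
      filter_upwards [hmem] with p hp
      simp only [Function.uncurry, hfun, if_pos hp]
    have hc : ContinuousAt (fun p : ℝ × ℝ => Real.sqrt p.2 * Real.sin (p.1 / Real.sqrt p.2))
        ((r, x) : ℝ × ℝ) := by
      have hsq : ContinuousAt (fun p : ℝ × ℝ => Real.sqrt p.2) (r, x) :=
        (Real.continuous_sqrt.comp continuous_snd).continuousAt
      have hne : Real.sqrt x ≠ 0 := ne_of_gt (Real.sqrt_pos.2 hx)
      exact hsq.mul (Real.continuous_sin.continuousAt.comp
        (continuous_fst.continuousAt.div hsq hne))
    exact hc.congr hev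

lemma hfun_continuous (r : ℝ) : Continuous (hfun r) :=
  hfun_cont2.comp (Continuous.prodMk_right r)

section waveop
variable {H : Type*} [NormedAddCommGroup H] [InnerProductSpace ℂ H] [CompleteSpace H]

lemma spec_nonneg (T : H →L[ℂ] H) (hsa : IsSelfAdjoint T)
    (hpos : ∀ x : H, 0 ≤ (⟪T x, x⟫).re) : ∀ x ∈ spectrum ℝ T, 0 ≤ x := by
  have hp : T.IsPositive := ⟨hsa.isSymmetric, fun x => by
    rw [ContinuousLinearMap.reApplyInnerSelf_apply]; exact hpos x⟩
  exact SpectrumRestricts.nnreal_iff.mp hp.spectrumRestricts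

lemma waveOp_eq (T : H →L[ℂ] H) (t : ℝ) : waveOp T t = cfc (hfun t) T := rfl

lemma waveOp_norm_le (T : H →L[ℂ] H) (t : ℝ) : ‖waveOp T t‖ ≤ |t| := by
  rw [waveOp_eq]
  exact norm_cfc_le (abs_nonneg t) fun x _ => by
    simpa [Real.norm_eq_abs] using hfun_abs_le t x

lemma waveOp_lipschitz (T : H →L[ℂ] H) (hsa : IsSelfAdjoint T) :
    LipschitzWith 1 (fun t => waveOp T t) := by
  apply LipschitzWith.of_dist_le_mul
  intro r r'
  rw [dist_eq_norm, dist_eq_norm, NNReal.coe_one, one_mul, Real.norm_eq_abs]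
  have h : waveOp T r - waveOp T r' = cfc (fun x => hfun r x - hfun r' x) T := by
    rw [waveOp_eq, waveOp_eq,
      cfc_sub (hfun r) (hfun r') T (hfun_continuous r).continuousOn
        (hfun_continuous r').continuousOn]
  rw [h]
  exact norm_cfc_le (abs_nonneg _) fun x _ => by
    simpa [Real.norm_eq_abs] using hfun_sub_abs_le r r' x

lemma waveOp_apply_cont (T : H →L[ℂ] H) (hsa : IsSelfAdjoint T) {α : Type*}
    [TopologicalSpace α] {u : α → ℝ} {v : α → H} (hu : Continuous u) (hv : Continuous v) :
    Continuous fun a => waveOp T (u a) (v a) :=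
  (((waveOp_lipschitz T hsa).continuous).comp hu).clm_apply hv

end waveop

lemma hfun_continuous_left (lam : ℝ) : Continuous fun σ => hfun σ lam :=
  hfun_cont2.comp (continuous_id.prodMk continuous_const)

lemma scalar_V (r : ℝ) {lam : ℝ} (hlam : 0 ≤ lam) :
    ∫ σ in (0:ℝ)..r, (r - σ) * hfun σ lam = r * lam - lam * hfun r lam := by
  rcases eq_or_lt_of_le hlam with h0 | hpos
  · simp [hfun, ← h0]
  · set a := Real.sqrt lam with ha
    have ha0 : 0 < a := Real.sqrt_pos.2 hpos
    have hane : a ≠ 0 := ne_of_gt ha0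
    have haa : a * a = lam := Real.mul_self_sqrt hlam
    have hfx : ∀ σ, hfun σ lam = a * Real.sin (σ / a) := fun σ => by
      rw [hfun, if_pos hpos]
    set F : ℝ → ℝ := fun σ => (σ - r) * (lam * Real.cos (σ / a)) - lam * a * Real.sin (σ / a)
      with hF
    have hder : ∀ σ : ℝ, HasDerivAt F ((r - σ) * hfun σ lam) σ := by
      intro σ
      have hdiv : HasDerivAt (fun σ : ℝ => σ / a) (1 / a) σ := (hasDerivAt_id σ).div_const a
      have hcos : HasDerivAt (fun σ : ℝ => Real.cos (σ / a)) (-Real.sin (σ / a) * (1 / a)) σ :=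
        ((Real.hasDerivAt_cos (σ / a)).comp σ hdiv :)
      have hsin : HasDerivAt (fun σ : ℝ => Real.sin (σ / a)) (Real.cos (σ / a) * (1 / a)) σ :=
        ((Real.hasDerivAt_sin (σ / a)).comp σ hdiv :)
      have h1 : HasDerivAt (fun σ : ℝ => σ - r) 1 σ := (hasDerivAt_id σ).sub_const r
      have h5 := (h1.mul (hcos.const_mul lam)).sub (hsin.const_mul (lam * a))
      refine h5.congr_deriv ?_
      rw [hfx σ, ← haa]
      field_simp
      ring
    have hcont : Continuous fun σ => (r - σ) * hfun σ lam :=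
      (continuous_const.sub continuous_id).mul (hfun_continuous_left lam)
    rw [intervalIntegral.integral_eq_sub_of_hasDerivAt (fun σ _ => hder σ)
      (hcont.intervalIntegrable 0 r)]
    simp only [hF, hfx, sub_self, zero_mul, zero_sub, zero_div, Real.sin_zero, Real.cos_zero]
    ring

lemma opV {H : Type*} [NormedAddCommGroup H] [InnerProductSpace ℂ H] [CompleteSpace H]
    (T : H →L[ℂ] H) (hsa : IsSelfAdjoint T) (hpos : ∀ x : H, 0 ≤ (⟪T x, x⟫).re)
    {r : ℝ} (hr : 0 ≤ r) :
    (∫ σ in (0:ℝ)..r, (r - σ) • waveOp T σ) = r • T - T * waveOp T r := by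
  have hspec := spec_nonneg T hsa hpos
  have key := cfc_integral (μ := volume.restrict (Set.Ioc (0:ℝ) r))
    (fun σ (z : ℝ) => (r - σ) * hfun σ z) (fun σ => |r - σ| * |σ|) T
    ?_ ?_ ?_ hsa
  · have h1 : ∀ σ : ℝ, cfc (fun z => (r - σ) * hfun σ z) T = (r - σ) • waveOp T σ := by
      intro σ
      have h2 := cfc_smul (r - σ) (hfun σ) T (hfun_continuous σ).continuousOn
      simp only [smul_eq_mul] at h2
      rw [waveOp_eq]
      exact h2
    have h3 : cfc (fun z : ℝ => ∫ σ in Set.Ioc (0:ℝ) r, (r - σ) * hfun σ z) T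
        = cfc (fun z : ℝ => r * z - z * hfun r z) T := by
      apply cfc_congr
      intro z hz
      have hz0 : 0 ≤ z := hspec z hz
      show (∫ σ in Set.Ioc (0:ℝ) r, (r - σ) * hfun σ z) = r * z - z * hfun r z
      rw [← intervalIntegral.integral_of_le hr]
      exact scalar_V r hz0
    have h6 : cfc (fun z : ℝ => r * z) T = r • T := by
      have h5 := cfc_smul r (id : ℝ → ℝ) T continuousOn_id
      simp only [smul_eq_mul, id_eq] at h5
      rw [cfc_id ℝ T hsa] at h5
      exact h5
    have h4 : cfc (fun z : ℝ => r * z - z * hfun r z) T = r • T - T * waveOp T r := by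
      rw [cfc_sub (fun z : ℝ => r * z) (fun z : ℝ => z * hfun r z) T
        (continuous_const.mul continuous_id).continuousOn
        (continuous_id.mul (hfun_continuous r)).continuousOn,
        cfc_mul (fun z : ℝ => z) (hfun r) T continuous_id.continuousOn
          (hfun_continuous r).continuousOn,
        cfc_id' ℝ T hsa, h6, waveOp_eq]
    rw [intervalIntegral.integral_of_le hr]
    have hcongr : (∫ σ in Set.Ioc (0:ℝ) r, (r - σ) • waveOp T σ)
        = ∫ σ in Set.Ioc (0:ℝ) r, cfc (fun z => (r - σ) * hfun σ z) T :=
      integral_congr_ae (Filter.Eventually.of_forall fun σ => (h1 σ).symm)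
    rw [hcongr, ← key, h3, h4]
  · exact ((continuous_const.sub continuous_fst).mul hfun_cont2).continuousOn
  · refine Filter.Eventually.of_forall fun σ z _ => ?_
    rw [Real.norm_eq_abs, abs_mul]
    exact mul_le_mul_of_nonneg_left (hfun_abs_le σ z) (abs_nonneg _)
  · have hInt : IntegrableOn (fun σ => |r - σ| * |σ|) (Set.Ioc (0:ℝ) r) volume :=
      (((continuous_const.sub continuous_id).abs).mul continuous_abs).integrableOn_Ioc
    exact hInt.hasFiniteIntegral

section fubini
variable {E : Type*} [NormedAddCommGroup E] [NormedSpace ℝ E] [CompleteSpace E]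

lemma taylor2 {φ : ℝ → E} (h1 : Differentiable ℝ φ) (h2 : Differentiable ℝ (deriv φ))
    (hc : Continuous (deriv (deriv φ))) (h0 : φ 0 = 0) (h0' : deriv φ 0 = 0) (u : ℝ) :
    ∫ s in (0:ℝ)..u, (u - s) • deriv (deriv φ) s = φ u := by
  have hder : ∀ s : ℝ, HasDerivAt (fun s => (u - s) • deriv φ s + φ s)
      ((u - s) • deriv (deriv φ) s) s := by
    intro s
    have hd1 : HasDerivAt (fun s : ℝ => u - s) (-1) s := by
      simpa using (hasDerivAt_id s).const_sub u
    have hd2 : HasDerivAt (deriv φ) (deriv (deriv φ) s) s := (h2 s).hasDerivAt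
    have hd3 := hd1.smul hd2
    have hd4 := (h1 s).hasDerivAt
    have h5 := hd3.add hd4
    refine h5.congr_deriv ?_
    simp only [neg_smul, one_smul]
    abel
  rw [intervalIntegral.integral_eq_sub_of_hasDerivAt (fun s _ => hder s)
    (((continuous_const.sub continuous_id).smul hc).intervalIntegrable 0 u)]
  simp [h0, h0']

lemma fubini_triangle {F : ℝ → ℝ → E} (hF : Continuous (Function.uncurry F)) {t : ℝ}
    (ht : 0 ≤ t) :
    (∫ s in (0:ℝ)..t, ∫ σ in (0:ℝ)..(t - s), F s σ)
      = ∫ σ in (0:ℝ)..t, ∫ s in (0:ℝ)..(t - σ), F s σ := by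
  classical
  set A : Set (ℝ × ℝ) := {p | 0 < p.1 ∧ 0 < p.2 ∧ p.1 + p.2 ≤ t} with hA
  have hAm : MeasurableSet A :=
    ((measurableSet_lt measurable_const measurable_fst).inter
      ((measurableSet_lt measurable_const measurable_snd).inter
        (measurableSet_le (measurable_fst.add measurable_snd) measurable_const)))
  set G : ℝ × ℝ → E := A.indicator (Function.uncurry F) with hG
  obtain ⟨C, hC⟩ : ∃ C, ∀ p ∈ Set.Icc (0:ℝ) t ×ˢ Set.Icc (0:ℝ) t, ‖Function.uncurry F p‖ ≤ C :=
    (isCompact_Icc.prod isCompact_Icc).exists_bound_of_continuousOn hF.continuousOn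
  have hC0 : 0 ≤ C :=
    le_trans (norm_nonneg _) (hC (0, 0) ⟨⟨le_refl 0, ht⟩, ⟨le_refl 0, ht⟩⟩)
  have hGint : Integrable G := by
    refine Integrable.mono' (g := (Set.Icc (0:ℝ) t ×ˢ Set.Icc (0:ℝ) t).indicator fun _ => C)
      ?_ ?_ (Filter.Eventually.of_forall ?_)
    · rw [integrable_indicator_iff (measurableSet_Icc.prod measurableSet_Icc)]
      exact integrableOn_const (isCompact_Icc.prod isCompact_Icc).measure_lt_top.ne
    · exact (hF.stronglyMeasurable.indicator hAm).aestronglyMeasurable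
    · intro p
      by_cases hp : p ∈ A
      · have hmem : p ∈ Set.Icc (0:ℝ) t ×ˢ Set.Icc (0:ℝ) t := by
          obtain ⟨hp1, hp2, hp3⟩ := hp
          exact ⟨⟨hp1.le, by linarith⟩, ⟨hp2.le, by linarith⟩⟩
        rw [hG, Set.indicator_of_mem hp, Set.indicator_of_mem hmem]
        exact hC p hmem
      · rw [hG, Set.indicator_of_notMem hp, norm_zero]
        exact Set.indicator_nonneg (fun _ _ => hC0) p
  have hGint' : Integrable (Function.uncurry fun s σ => G (s, σ))
      ((volume : Measure ℝ).prod (volume : Measure ℝ)) := by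
    rw [← MeasureTheory.Measure.volume_eq_prod]
    exact hGint
  have swap := MeasureTheory.integral_integral_swap hGint'
  have lhs_eq : (∫ s in (0:ℝ)..t, ∫ σ in (0:ℝ)..(t - s), F s σ)
      = ∫ s : ℝ, ∫ σ : ℝ, G (s, σ) := by
    have h1 : ∀ s : ℝ, (∫ σ : ℝ, G (s, σ))
        = (Set.Ioc (0:ℝ) t).indicator (fun s => ∫ σ in (0:ℝ)..(t - s), F s σ) s := by
      intro s
      by_cases hs : s ∈ Set.Ioc (0:ℝ) t
      · have h2 : ∀ σ : ℝ, G (s, σ) = (Set.Ioc (0:ℝ) (t - s)).indicator (F s) σ := by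
          intro σ
          by_cases hσ : σ ∈ Set.Ioc (0:ℝ) (t - s)
          · rw [Set.indicator_of_mem hσ, hG, Set.indicator_of_mem]
            · rfl
            · exact ⟨hs.1, hσ.1, by have := hσ.2; linarith⟩
          · rw [Set.indicator_of_notMem hσ, hG, Set.indicator_of_notMem]
            intro hmm
            exact hσ ⟨hmm.2.1, by have := hmm.2.2; linarith⟩
        rw [Set.indicator_of_mem hs]
        simp_rw [h2]
        rw [MeasureTheory.integral_indicator measurableSet_Ioc,
          ← intervalIntegral.integral_of_le (by linarith [hs.2] : (0:ℝ) ≤ t - s)]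
      · rw [Set.indicator_of_notMem hs]
        have h2 : ∀ σ : ℝ, G (s, σ) = 0 := by
          intro σ
          rw [hG, Set.indicator_of_notMem]
          rintro ⟨hs1, hσ1, hs2⟩
          exact hs ⟨hs1, by linarith⟩
        simp only [h2]
        exact integral_zero _ _
    rw [intervalIntegral.integral_of_le ht, ← MeasureTheory.integral_indicator measurableSet_Ioc]
    exact (integral_congr_ae (Filter.Eventually.of_forall fun s => h1 s)).symm
  have rhs_eq : (∫ σ in (0:ℝ)..t, ∫ s in (0:ℝ)..(t - σ), F s σ)
      = ∫ σ : ℝ, ∫ s : ℝ, G (s, σ) := by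
    have h1 : ∀ σ : ℝ, (∫ s : ℝ, G (s, σ))
        = (Set.Ioc (0:ℝ) t).indicator (fun σ => ∫ s in (0:ℝ)..(t - σ), F s σ) σ := by
      intro σ
      by_cases hσ : σ ∈ Set.Ioc (0:ℝ) t
      · have h2 : ∀ s : ℝ, G (s, σ) = (Set.Ioc (0:ℝ) (t - σ)).indicator (fun s => F s σ) s := by
          intro s
          by_cases hs : s ∈ Set.Ioc (0:ℝ) (t - σ)
          · rw [Set.indicator_of_mem hs, hG, Set.indicator_of_mem]
            · rfl
            · exact ⟨hs.1, hσ.1, by have := hs.2; linarith⟩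
          · rw [Set.indicator_of_notMem hs, hG, Set.indicator_of_notMem]
            intro hmm
            exact hs ⟨hmm.1, by have := hmm.2.2; linarith⟩
        rw [Set.indicator_of_mem hσ]
        simp_rw [h2]
        rw [MeasureTheory.integral_indicator measurableSet_Ioc,
          ← intervalIntegral.integral_of_le (by linarith [hσ.2] : (0:ℝ) ≤ t - σ)]
      · rw [Set.indicator_of_notMem hσ]
        have h2 : ∀ s : ℝ, G (s, σ) = 0 := by
          intro s
          rw [hG, Set.indicator_of_notMem]
          rintro ⟨hs1, hσ1, hs2⟩
          exact hσ ⟨hσ1, by linarith⟩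
        simp only [h2]
        exact integral_zero _ _
    rw [intervalIntegral.integral_of_le ht, ← MeasureTheory.integral_indicator measurableSet_Ioc]
    exact (integral_congr_ae (Filter.Eventually.of_forall fun σ => h1 σ)).symm
  rw [lhs_eq, rhs_eq]
  exact swap

end fubini

section key
variable {H : Type*} [NormedAddCommGroup H] [InnerProductSpace ℂ H] [CompleteSpace H]

lemma opV_applied (T : H →L[ℂ] H) (hsa : IsSelfAdjoint T)
    (hpos : ∀ x : H, 0 ≤ (⟪T x, x⟫).re) {r : ℝ} (hr : 0 ≤ r) (y : H) :
    T (waveOp T r y) = r • T y - ∫ σ in (0:ℝ)..r, (r - σ) • waveOp T σ y := by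
  have h1 := congrArg (fun B : H →L[ℂ] H => B y) (opV T hsa hpos hr)
  have hcontop : Continuous fun σ : ℝ => (r - σ) • waveOp T σ :=
    (continuous_const.sub continuous_id).smul (waveOp_lipschitz T hsa).continuous
  have hint : IntervalIntegrable (fun σ : ℝ => (r - σ) • waveOp T σ) volume 0 r :=
    hcontop.intervalIntegrable 0 r
  rw [ContinuousLinearMap.intervalIntegral_apply hint y] at h1
  simp only [ContinuousLinearMap.sub_apply, ContinuousLinearMap.smul_apply,
    ContinuousLinearMap.mul_apply, ContinuousLinearMap.coe_smul', Pi.smul_apply] at h1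
  rw [eq_sub_iff_add_eq] at h1 ⊢
  rw [add_comm]
  exact h1

lemma key_identity (T : H →L[ℂ] H) (hsa : IsSelfAdjoint T)
    (hpos : ∀ x : H, 0 ≤ (⟪T x, x⟫).re) {g : ℝ → H}
    (hg1 : Differentiable ℝ g) (hg2 : Differentiable ℝ (deriv g))
    (hgc : Continuous (deriv (deriv g))) (hg0 : g 0 = 0) (hg0' : deriv g 0 = 0)
    {t : ℝ} (ht : 0 ≤ t) :
    (∫ s in (0:ℝ)..t, waveOp T (t - s) (g s))
      = T (g t - ∫ s in (0:ℝ)..t, waveOp T (t - s) (deriv (deriv g) s)) := by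
  set q : ℝ → H := deriv (deriv g) with hq
  have hqc : Continuous q := hgc
  have hgcont : Continuous g := hg1.continuous
  have htay : ∀ u : ℝ, (∫ s in (0:ℝ)..u, (u - s) • q s) = g u := fun u => by
    rw [hq]; exact taylor2 hg1 hg2 hgc hg0 hg0' u
  have hc1 : Continuous fun s => waveOp T (t - s) (q s) :=
    waveOp_apply_cont T hsa (continuous_const.sub continuous_id) hqc
  have hc2 : Continuous fun s => waveOp T (t - s) (g s) :=
    waveOp_apply_cont T hsa (continuous_const.sub continuous_id) hgcont
  have hTq : Continuous fun s => T (q s) := T.continuous.comp hqc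
  set D : H := ∫ s in (0:ℝ)..t, waveOp T (t - s) (q s) with hD
  set W : H := ∫ s in (0:ℝ)..t, waveOp T (t - s) (g s) with hW
  set φ : ℝ → H := fun s => (t - s) • T (q s) - T (waveOp T (t - s) (q s)) with hφ
  have hφc : Continuous φ :=
    ((continuous_const.sub continuous_id).smul hTq).sub (T.continuous.comp hc1)
  have hc3 : Continuous fun s : ℝ => (t - s) • T (q s) :=
    (continuous_const.sub continuous_id).smul hTq
  have hint1 : IntervalIntegrable (fun s : ℝ => (t - s) • T (q s)) volume 0 t :=
    hc3.intervalIntegrable 0 t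
  have hc4 : Continuous fun s : ℝ => (t - s) • q s :=
    (continuous_const.sub continuous_id).smul hqc
  have hint3 : IntervalIntegrable (fun s : ℝ => (t - s) • q s) volume 0 t :=
    hc4.intervalIntegrable 0 t
  have step1 : T D = ∫ s in (0:ℝ)..t, T (waveOp T (t - s) (q s)) :=
    (ContinuousLinearMap.intervalIntegral_comp_comm T (hc1.intervalIntegrable 0 t)).symm
  set double : H := ∫ s in (0:ℝ)..t, ∫ σ in (0:ℝ)..(t - s), (t - s - σ) • waveOp T σ (q s)
    with hdouble
  have hVs : ∀ s ∈ Set.uIcc (0:ℝ) t,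
      (∫ σ in (0:ℝ)..(t - s), (t - s - σ) • waveOp T σ (q s)) = φ s := by
    intro s hs
    rw [Set.uIcc_of_le ht] at hs
    have hr : 0 ≤ t - s := by linarith [hs.2]
    have h2 := opV_applied T hsa hpos hr (q s)
    rw [eq_sub_iff_add_eq] at h2
    show (∫ σ in (0:ℝ)..(t - s), (t - s - σ) • waveOp T σ (q s))
        = (t - s) • T (q s) - T (waveOp T (t - s) (q s))
    rw [eq_sub_iff_add_eq, add_comm]
    exact h2
  have hdouble_eq : double = ∫ s in (0:ℝ)..t, φ s := by
    rw [hdouble]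
    exact intervalIntegral.integral_congr hVs
  have step2 : T D = (∫ s in (0:ℝ)..t, (t - s) • T (q s)) - double := by
    rw [step1, hdouble_eq, ← intervalIntegral.integral_sub hint1 (hφc.intervalIntegrable 0 t)]
    refine intervalIntegral.integral_congr fun s _ => ?_
    show T (waveOp T (t - s) (q s))
        = (t - s) • T (q s) - ((t - s) • T (q s) - T (waveOp T (t - s) (q s)))
    rw [sub_sub_cancel]
  have step3 : (∫ s in (0:ℝ)..t, (t - s) • T (q s)) = T (g t) := by
    have h3 : ∀ s : ℝ, (t - s) • T (q s) = T ((t - s) • q s) := fun s =>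
      (T.map_smul_of_tower (t - s) (q s)).symm
    rw [intervalIntegral.integral_congr (fun s _ => h3 s),
      ContinuousLinearMap.intervalIntegral_comp_comm T hint3, htay t]
  have step4 : double = W := by
    have hFc : Continuous (Function.uncurry fun s σ => (t - s - σ) • waveOp T σ (q s)) :=
      ((continuous_const.sub continuous_fst).sub continuous_snd).smul
        (waveOp_apply_cont T hsa continuous_snd (hqc.comp continuous_fst))
    rw [hdouble, fubini_triangle hFc ht]
    have hinner : ∀ σ ∈ Set.uIcc (0:ℝ) t,
        (∫ s in (0:ℝ)..(t - σ), (t - s - σ) • waveOp T σ (q s))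
          = waveOp T σ (g (t - σ)) := by
      intro σ _
      have h5 : ∀ s : ℝ, (t - s - σ) • waveOp T σ (q s)
          = waveOp T σ ((t - σ - s) • q s) := by
        intro s
        rw [(waveOp T σ).map_smul_of_tower]
        congr 1
        ring
      have hc5 : Continuous fun s : ℝ => (t - σ - s) • q s :=
        (continuous_const.sub continuous_id).smul hqc
      have hint4 : IntervalIntegrable (fun s : ℝ => (t - σ - s) • q s) volume 0 (t - σ) :=
        hc5.intervalIntegrable 0 (t - σ)
      rw [intervalIntegral.integral_congr (fun s _ => h5 s),
        ContinuousLinearMap.intervalIntegral_comp_comm (waveOp T σ) hint4, htay (t - σ)]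
    rw [intervalIntegral.integral_congr hinner]
    have h7 := intervalIntegral.integral_comp_sub_left
      (fun σ => waveOp T σ (g (t - σ))) t (a := 0) (b := t)
    simp only [sub_zero, sub_self] at h7
    rw [← h7, hW]
    refine intervalIntegral.integral_congr fun s _ => ?_
    rw [sub_sub_cancel]
  have hTD : T D = T (g t) - W := by rw [step2, step3, step4]
  rw [map_sub, hTD, sub_sub_cancel]

end key

section controls
variable {H : Type*} [NormedAddCommGroup H] [InnerProductSpace ℂ H] [CompleteSpace H]

lemma deriv_mem_submodule {K : Submodule ℂ H} [K.HasOrthogonalProjection] {f : ℝ → H}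
    (hf : Differentiable ℝ f) (hK : ∀ t, f t ∈ K) (t : ℝ) : deriv f t ∈ K := by
  set P : H →L[ℂ] H := K.subtypeL.comp (K.orthogonalProjection) with hP
  have hPval : ∀ x : H, P x = (K.orthogonalProjection x : H) := fun x => rfl
  have hPf : (fun s => P (f s)) = f := funext fun s => by
    rw [hPval]
    exact Submodule.starProjection_eq_self_iff.mpr (hK s)
  have h2 : HasDerivAt (fun s => P (f s)) (P (deriv f t)) t := by
    exact ((P.restrictScalars ℝ).hasFDerivAt).comp_hasDerivAt t (hf t).hasDerivAt
  have h3 : P (deriv f t) = deriv f t := by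
    rw [← h2.deriv, hPf]
  rw [hPval] at h3
  exact (Submodule.starProjection_eq_self_iff (K := K)).mp h3

lemma intervalIntegral_mem_submodule {K : Submodule ℂ H} [K.HasOrthogonalProjection]
    {f : ℝ → H} {a b : ℝ} (hf : IntervalIntegrable f volume a b) (hK : ∀ t, f t ∈ K) :
    (∫ s in a..b, f s) ∈ K := by
  set P : H →L[ℂ] H := K.subtypeL.comp (K.orthogonalProjection) with hP
  have hPval : ∀ x : H, P x = (K.orthogonalProjection x : H) := fun x => rfl
  have h1 : (∫ s in a..b, P (f s)) = P (∫ s in a..b, f s) :=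
    ContinuousLinearMap.intervalIntegral_comp_comm P hf
  have h2 : (∫ s in a..b, P (f s)) = ∫ s in a..b, f s :=
    intervalIntegral.integral_congr fun s _ => by
      rw [hPval]
      exact Submodule.starProjection_eq_self_iff.mpr (hK s)
  have h3 : P (∫ s in a..b, f s) = ∫ s in a..b, f s := by rw [← h1, h2]
  rw [hPval] at h3
  exact (Submodule.starProjection_eq_self_iff (K := K)).mp h3

lemma smooth_deriv {E : Type*} [NormedAddCommGroup E] [NormedSpace ℝ E] {f : ℝ → E}
    (hf : ContDiff ℝ (⊤ : ℕ∞) f) : ContDiff ℝ (⊤ : ℕ∞) (deriv f) :=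
  (contDiff_infty_iff_deriv.mp hf).2

lemma smooth_diff {E : Type*} [NormedAddCommGroup E] [NormedSpace ℝ E] {f : ℝ → E}
    (hf : ContDiff ℝ (⊤ : ℕ∞) f) : Differentiable ℝ f :=
  (contDiff_infty_iff_deriv.mp hf).1

lemma deriv_vanish {E : Type*} [NormedAddCommGroup E] [NormedSpace ℝ E] {f : ℝ → E} {ε : ℝ}
    (hε : ∀ t ≤ ε, f t = 0) : ∀ t < ε, deriv f t = 0 := by
  intro t ht
  have hev : f =ᶠ[nhds t] fun _ => 0 := by
    filter_upwards [Iio_mem_nhds ht] with s hs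
    exact hε s (le_of_lt hs)
  rw [hev.deriv_eq]
  simp

/-- `f''` is again a smooth control. -/
lemma IsSmoothControl.deriv2 {K : Submodule ℂ H} [K.HasOrthogonalProjection] {f : ℝ → H}
    (hf : IsSmoothControl K f) : IsSmoothControl K (deriv (deriv f)) := by
  obtain ⟨hsm, hKm, ε, hε0, hεf⟩ := hf
  have h1 : ∀ t, deriv f t ∈ K := deriv_mem_submodule (smooth_diff hsm) hKm
  refine ⟨smooth_deriv (smooth_deriv hsm), deriv_mem_submodule (smooth_diff (smooth_deriv hsm)) h1, ε / 4, by positivity, ?_⟩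
  intro t ht
  have hd1 : ∀ s ≤ ε / 2, deriv f s = 0 := fun s hs =>
    deriv_vanish hεf s (by linarith)
  exact deriv_vanish hd1 t (by linarith)

lemma wave_neg (T : H →L[ℂ] H) (f : ℝ → H) (τ : ℝ) :
    wave T (fun t => -f t) τ = -wave T f τ := by
  have h1 : (deriv (deriv fun t => -f t)) = fun s => -(deriv (deriv f) s) := by
    rw [deriv.fun_neg']
    exact funext fun s => deriv.fun_neg
  unfold wave
  rw [h1]
  simp only [map_neg]
  rw [intervalIntegral.integral_neg]
  abel

end controls

section mainproof
variable {H : Type*} [NormedAddCommGroup H] [InnerProductSpace ℂ H] [CompleteSpace H]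

lemma pmap_zero (f : H →ₗ.[ℂ] H) : f 0 = 0 := f.toFun.map_zero

/-- The fundamental computation: for a smooth control `f`, the wave `u^f(τ)` lies in the domain
of `L₀*` and `L₀* u^f(τ) = -u^{f''}(τ)`. -/
lemma control_key (L₀ L : H →ₗ.[ℂ] H) (T : H →L[ℂ] H) (K : Submodule ℂ H)
    [K.HasOrthogonalProjection] (hs : Setting L₀ L T K) {f : ℝ → H}
    (hf : IsSmoothControl K f) {τ : ℝ} (hτ : 0 ≤ τ) :
    ∃ hd : wave T f τ ∈ L₀.adjoint.domain,
      L₀.adjoint ⟨wave T f τ, hd⟩ = -wave T (deriv (deriv f)) τ := by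
  obtain ⟨hsm, hKm, ε, hε0, hεf⟩ := hf
  have hsm1 := smooth_deriv hsm
  have hsm2 := smooth_deriv hsm1
  have hsm3 := smooth_deriv hsm2
  have hsm4 := smooth_deriv hsm3
  have hg1 : Differentiable ℝ (deriv (deriv f)) := smooth_diff hsm2
  have hg2 : Differentiable ℝ (deriv (deriv (deriv f))) := smooth_diff hsm3
  have hgc : Continuous (deriv (deriv (deriv (deriv f)))) := (smooth_diff hsm4).continuous
  have v1 : ∀ s ≤ ε / 2, deriv f s = 0 := fun s hs => deriv_vanish hεf s (by linarith)
  have v2 : ∀ s ≤ ε / 4, deriv (deriv f) s = 0 := fun s hs => deriv_vanish v1 s (by linarith)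
  have v3 : ∀ s ≤ ε / 8, deriv (deriv (deriv f)) s = 0 := fun s hs =>
    deriv_vanish v2 s (by linarith)
  have hg0 : deriv (deriv f) 0 = 0 := v2 0 (by positivity)
  have hg0' : deriv (deriv (deriv f)) 0 = 0 := v3 0 (by positivity)
  have hkey : (∫ s in (0:ℝ)..τ, waveOp T (τ - s) (deriv (deriv f) s))
      = T (deriv (deriv f) τ
          - ∫ s in (0:ℝ)..τ, waveOp T (τ - s) (deriv (deriv (deriv (deriv f))) s)) := by
    have h := key_identity T hs.T_selfadjoint hs.T_positive hg1 hg2 hgc hg0 hg0' hτ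
    exact h
  set z : H := deriv (deriv f) τ
    - ∫ s in (0:ℝ)..τ, waveOp T (τ - s) (deriv (deriv (deriv (deriv f))) s) with hzdef
  have hTzmem : T z ∈ L.domain := hs.T_mem_domain z
  have hWdom : (∫ s in (0:ℝ)..τ, waveOp T (τ - s) (deriv (deriv f) s)) ∈ L.domain := by
    rw [hkey]; exact hTzmem
  have hWadj : (∫ s in (0:ℝ)..τ, waveOp T (τ - s) (deriv (deriv f) s)) ∈ L₀.adjoint.domain :=
    hs.le_adjoint.1 hWdom
  obtain ⟨hfdom, hfval⟩ := (hs.kernel (f τ)).mp (hKm τ)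
  have hd : wave T f τ ∈ L₀.adjoint.domain := by
    show -f τ + (∫ s in (0:ℝ)..τ, waveOp T (τ - s) (deriv (deriv f) s)) ∈ L₀.adjoint.domain
    exact add_mem (neg_mem hfdom) hWadj
  refine ⟨hd, ?_⟩
  have hsplit : (⟨wave T f τ, hd⟩ : L₀.adjoint.domain)
      = -(⟨f τ, hfdom⟩ : L₀.adjoint.domain)
        + ⟨∫ s in (0:ℝ)..τ, waveOp T (τ - s) (deriv (deriv f) s), hWadj⟩ := by
    apply Subtype.ext
    rfl
  rw [hsplit, LinearPMap.map_add, LinearPMap.map_neg, hfval, neg_zero, zero_add]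
  have hLeq : L₀.adjoint
      (⟨∫ s in (0:ℝ)..τ, waveOp T (τ - s) (deriv (deriv f) s), hWadj⟩ : L₀.adjoint.domain)
      = L ⟨∫ s in (0:ℝ)..τ, waveOp T (τ - s) (deriv (deriv f) s), hWdom⟩ :=
    (hs.le_adjoint.2 rfl).symm
  rw [hLeq]
  have hsub : (⟨∫ s in (0:ℝ)..τ, waveOp T (τ - s) (deriv (deriv f) s), hWdom⟩ : L.domain)
      = ⟨T z, hTzmem⟩ := Subtype.ext hkey
  rw [hsub, hs.T_inv_right z hTzmem]
  show z = -wave T (deriv (deriv f)) τ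
  rw [hzdef]
  unfold wave
  abel

/-- Everything reachable at time `τ ≥ 0` is in the domain of `L₀*`. -/
lemma reach_mem_dom (L₀ L : H →ₗ.[ℂ] H) (T : H →L[ℂ] H) (K : Submodule ℂ H)
    [K.HasOrthogonalProjection] (hs : Setting L₀ L T K) {τ : ℝ} (hτ : 0 ≤ τ) :
    ∀ x ∈ reachSet K T τ, x ∈ L₀.adjoint.domain := by
  intro x hx
  rw [reachSet, if_pos hτ] at hx
  obtain ⟨f, hf, hfx⟩ := hx
  obtain ⟨hd, -⟩ := control_key L₀ L T K hs hf hτ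
  rwa [hfx] at hd

/-- The image of the reachable set under `L₀*` is the reachable set. -/
lemma reach_img (L₀ L : H →ₗ.[ℂ] H) (T : H →L[ℂ] H) (K : Submodule ℂ H)
    [K.HasOrthogonalProjection] (hs : Setting L₀ L T K) {τ : ℝ} (hτ : 0 ≤ τ) :
    {z : H | ∃ x, ∃ hx : x ∈ L₀.adjoint.domain, x ∈ reachSet K T τ ∧ L₀.adjoint ⟨x, hx⟩ = z}
      = reachSet K T τ := by
  have hset : reachSet K T τ = {x | ∃ f, IsSmoothControl K f ∧ wave T f τ = x} :=
    if_pos hτ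
  apply Set.Subset.antisymm
  · rintro z ⟨x, hx, hxr, hval⟩
    rw [hset] at hxr ⊢
    obtain ⟨f, hf, hfx⟩ := hxr
    obtain ⟨hd, hdval⟩ := control_key L₀ L T K hs hf hτ
    subst hfx
    refine ⟨fun t => -(deriv (deriv f) t), ?_, ?_⟩
    · obtain ⟨h1, h2, ε, hε0, hεv⟩ := hf.deriv2
      exact ⟨h1.neg, fun t => neg_mem (h2 t), ε, hε0, fun t ht => by
        show -deriv (deriv f) t = 0
        rw [hεv t ht, neg_zero]⟩
    · rw [wave_neg, ← hdval]
      exact hval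
  · intro x hx
    rw [hset] at hx
    obtain ⟨f, hf, hfx⟩ := hx
    obtain ⟨hsm, hKm, ε, hε0, hεf⟩ := hf
    have hfc : Continuous f := hsm.continuous
    set G1 : ℝ → H := fun t => ∫ s in (0:ℝ)..t, f s with hG1
    set G2 : ℝ → H := fun t => ∫ s in (0:ℝ)..t, s • f s with hG2
    have hsfc : Continuous fun s : ℝ => s • f s := continuous_id.smul hfc
    have hG1d : ∀ t : ℝ, HasDerivAt G1 (f t) t := fun t =>
      (hfc.integral_hasStrictDerivAt 0 t).hasDerivAt
    have hG2d : ∀ t : ℝ, HasDerivAt G2 (t • f t) t := fun t =>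
      (hsfc.integral_hasStrictDerivAt 0 t).hasDerivAt
    have hG1deriv : deriv G1 = f := funext fun t => (hG1d t).deriv
    have hG2deriv : deriv G2 = fun t => t • f t := funext fun t => (hG2d t).deriv
    have hG1smooth : ContDiff ℝ (⊤ : ℕ∞) G1 := by
      rw [contDiff_infty_iff_deriv]
      exact ⟨fun t => (hG1d t).differentiableAt, by rw [hG1deriv]; exact hsm⟩
    have hG2smooth : ContDiff ℝ (⊤ : ℕ∞) G2 := by
      rw [contDiff_infty_iff_deriv]
      refine ⟨fun t => (hG2d t).differentiableAt, ?_⟩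
      rw [hG2deriv]
      exact contDiff_id.smul hsm
    set g : ℝ → H := fun t => G2 t - t • G1 t with hgdef
    have hgsmooth : ContDiff ℝ (⊤ : ℕ∞) g := hG2smooth.sub (contDiff_id.smul hG1smooth)
    have hgd : ∀ t : ℝ, HasDerivAt g (-G1 t) t := by
      intro t
      have h2 : HasDerivAt (fun t : ℝ => t • G1 t) (t • f t + (1:ℝ) • G1 t) t := by
        exact (hasDerivAt_id t).smul (hG1d t)
      have h3 := (hG2d t).sub h2
      refine h3.congr_deriv ?_
      simp only [one_smul]
      abel
    have hgderiv : deriv g = fun t => -G1 t := funext fun t => (hgd t).deriv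
    have hgd2 : deriv (deriv g) = fun t => -f t := by
      rw [hgderiv]
      funext t
      rw [deriv.fun_neg]
      have := (hG1d t).deriv
      rw [this]
    have hgK : ∀ t, g t ∈ K := by
      intro t
      apply sub_mem
      · exact intervalIntegral_mem_submodule (hsfc.intervalIntegrable _ _)
          (fun s => Submodule.smul_of_tower_mem K s (hKm s))
      · exact Submodule.smul_of_tower_mem K t
          (intervalIntegral_mem_submodule (hfc.intervalIntegrable _ _) hKm)
    have hgvan : ∀ t ≤ ε, g t = 0 := by
      intro t ht
      have hz : ∀ s ∈ Set.uIcc (0:ℝ) t, f s = 0 := by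
        intro s hs
        refine hεf s (le_trans hs.2 ?_)
        exact max_le hε0.le ht
      have hz1 : G1 t = 0 := by
        rw [hG1]
        show (∫ s in (0:ℝ)..t, f s) = 0
        rw [intervalIntegral.integral_congr (g := fun _ => (0:H)) hz]
        simp
      have hz2 : G2 t = 0 := by
        rw [hG2]
        show (∫ s in (0:ℝ)..t, s • f s) = 0
        rw [intervalIntegral.integral_congr (g := fun _ => (0:H))
          (fun s hs => by rw [hz s hs, smul_zero])]
        simp
      rw [hgdef]
      simp [hz1, hz2]
    have hgctrl : IsSmoothControl K g := ⟨hgsmooth, hgK, ε, hε0, hgvan⟩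
    obtain ⟨hd, hdval⟩ := control_key L₀ L T K hs hgctrl hτ
    refine ⟨wave T g τ, hd, ?_, ?_⟩
    · rw [hset]
      exact ⟨g, hgctrl, rfl⟩
    · rw [hdval, hgd2, wave_neg, neg_neg, hfx]

end mainproof


/-- invariance of reachable sets. For every `τ ≥ 0`, `U^τ ⊆ dom L₀*` and the
image `L₀*(U^τ)` equals `U^τ`; consequently `L₀*(U) = U`. -/
theorem stmt6 (L₀ L : H →ₗ.[ℂ] H) (T : H →L[ℂ] H) (K : Submodule ℂ H)
    [K.HasOrthogonalProjection] (hs : Setting L₀ L T K) (τ : ℝ) (hτ : 0 ≤ τ) :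
    (∀ x ∈ reachSet K T τ, x ∈ L₀.adjoint.domain) ∧
    {z : H | ∃ x, ∃ hx : x ∈ L₀.adjoint.domain, x ∈ reachSet K T τ ∧ L₀.adjoint ⟨x, hx⟩ = z}
      = reachSet K T τ ∧
    (∀ x ∈ (reachSpan K T : Set H), x ∈ L₀.adjoint.domain) ∧
    {z : H | ∃ x, ∃ hx : x ∈ L₀.adjoint.domain, x ∈ reachSpan K T ∧ L₀.adjoint ⟨x, hx⟩ = z}
      = (reachSpan K T : Set H) := by
  have hmem := reach_mem_dom L₀ L T K hs (τ := τ) hτ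
  have himg := reach_img L₀ L T K hs (τ := τ) hτ
  have hsub : (⋃ σ ∈ Set.Ioi (0:ℝ), reachSet K T σ) ⊆ (L₀.adjoint.domain : Set H) := by
    intro x hx
    rw [Set.mem_iUnion₂] at hx
    obtain ⟨σ, hσ, hxσ⟩ := hx
    exact reach_mem_dom L₀ L T K hs (le_of_lt hσ) x hxσ
  have hspan_dom : ∀ x ∈ (reachSpan K T : Set H), x ∈ L₀.adjoint.domain := fun x hx =>
    (Submodule.span_le.mpr hsub) hx
  refine ⟨hmem, himg, hspan_dom, ?_⟩
  apply Set.Subset.antisymm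
  · rintro z ⟨x, hx, hxs, rfl⟩
    revert hx
    induction hxs using Submodule.span_induction with
    | mem x hxU =>
      intro hx
      rw [Set.mem_iUnion₂] at hxU
      obtain ⟨σ, hσ, hxσ⟩ := hxU
      have himgσ := reach_img L₀ L T K hs (le_of_lt hσ)
      have hval : L₀.adjoint ⟨x, hx⟩ ∈ reachSet K T σ := by
        rw [← himgσ]
        exact ⟨x, hx, hxσ, rfl⟩
      exact Submodule.subset_span (Set.mem_biUnion hσ hval)
    | zero =>
      intro hx
      rw [show (⟨0, hx⟩ : L₀.adjoint.domain) = 0 from Subtype.ext rfl, pmap_zero]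
      exact Submodule.zero_mem _
    | add x y hxs hys ihx ihy =>
      intro hxy
      have hxd : x ∈ L₀.adjoint.domain := hspan_dom x hxs
      have hyd : y ∈ L₀.adjoint.domain := hspan_dom y hys
      rw [show (⟨x + y, hxy⟩ : L₀.adjoint.domain) = ⟨x, hxd⟩ + ⟨y, hyd⟩ from Subtype.ext rfl,
        LinearPMap.map_add]
      exact Submodule.add_mem _ (ihx hxd) (ihy hyd)
    | smul c x hxs ihx =>
      intro hcx
      have hxd : x ∈ L₀.adjoint.domain := hspan_dom x hxs
      rw [show (⟨c • x, hcx⟩ : L₀.adjoint.domain) = c • ⟨x, hxd⟩ from Subtype.ext rfl,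
        LinearPMap.map_smul]
      exact Submodule.smul_mem _ c (ihx hxd)
  · intro z hz
    induction hz using Submodule.span_induction with
    | mem x hxU =>
      rw [Set.mem_iUnion₂] at hxU
      obtain ⟨σ, hσ, hxσ⟩ := hxU
      have himgσ := reach_img L₀ L T K hs (le_of_lt hσ)
      have hx' : x ∈ {z : H | ∃ w, ∃ hw : w ∈ L₀.adjoint.domain,
          w ∈ reachSet K T σ ∧ L₀.adjoint ⟨w, hw⟩ = z} := by rw [himgσ]; exact hxσ
      obtain ⟨w, hw, hwr, hwv⟩ := hx'
      exact ⟨w, hw, Submodule.subset_span (Set.mem_biUnion hσ hwr), hwv⟩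
    | zero =>
      refine ⟨0, Submodule.zero_mem _, Submodule.zero_mem _, ?_⟩
      rw [show (⟨0, Submodule.zero_mem _⟩ : L₀.adjoint.domain) = 0 from Subtype.ext rfl,
        pmap_zero]
    | add x y hxs hys ihx ihy =>
      obtain ⟨a, ha, has, hav⟩ := ihx
      obtain ⟨b, hb, hbs, hbv⟩ := ihy
      refine ⟨a + b, Submodule.add_mem _ ha hb, Submodule.add_mem _ has hbs, ?_⟩
      rw [show (⟨a + b, Submodule.add_mem _ ha hb⟩ : L₀.adjoint.domain) = ⟨a, ha⟩ + ⟨b, hb⟩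
        from Subtype.ext rfl, LinearPMap.map_add, hav, hbv]
    | smul c x hxs ihx =>
      obtain ⟨a, ha, has, hav⟩ := ihx
      refine ⟨c • a, Submodule.smul_mem _ c ha, Submodule.smul_mem _ c has, ?_⟩
      rw [show (⟨c • a, Submodule.smul_mem _ c ha⟩ : L₀.adjoint.domain) = c • ⟨a, ha⟩
        from Subtype.ext rfl, LinearPMap.map_smul, hav]
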